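/- Let n ≥ 1. There exists a map Φ assigning to every finite set B of exponent vectors in ℕ^n a finite set Φ(B) of exponent vectors in ℕ^n such that: (i) Φ(B) is cone-closed; (ii) |Φ(B)| = |B|; (iii) the square matrix over ℚ with rows indexed by a ∈ Φ(B), columns indexed by b ∈ B, and (a,b)-entry ∏_{i=1}^{n} C(bᵢ, aᵢ) is invertible; and (iv) Φ is monotone, i.e., for all finite sets B ⊆ B′ of exponent vectors, Φ(B) ⊆ Φ(B′). -/

import Mathlib

open Finset

namespace FCC

variable {n : ℕ}

/-- transfer coefficient -/
def c (a b : Fin n → ℕ) : ℚ := ∏ i, ((b i).choose (a i) : ℚ)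

lemma c_self (b : Fin n → ℕ) : c b b = 1 := by
  simp [c]

lemma c_eq_zero_of_not_le {a b : Fin n → ℕ} (h : ¬ a ≤ b) : c a b = 0 := by
  rw [Pi.le_def] at h
  push_neg at h
  obtain ⟨i, hi⟩ := h
  exact Finset.prod_eq_zero (Finset.mem_univ i)
    (by simpa using Nat.choose_eq_zero_of_lt hi)

lemma le_of_c_ne_zero {a b : Fin n → ℕ} (h : c a b ≠ 0) : a ≤ b := by
  by_contra hc; exact h (c_eq_zero_of_not_le hc)

/-- the Pascal-type identity used for the derivation operator. -/
lemma choose_identity (m k : ℕ) :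
    (k+1) * m.choose (k+1) + k * m.choose k = m * m.choose k := by
  induction m with
  | zero =>
    rcases Nat.eq_zero_or_pos k with rfl | hk
    · simp
    · simp [Nat.choose_eq_zero_of_lt hk]
  | succ m _ =>
    have h1 : ∀ j : ℕ, (j+1) * (m+1).choose (j+1) = (m+1) * m.choose j := by
      intro j
      have := (Nat.add_one_mul_choose_eq m j).symm
      simpa [mul_comm] using this
    rcases k with _ | k'
    · simp [h1 0]
    · rw [h1 (k'+1), h1 k', Nat.choose_succ_succ m k']
      ring

noncomputable section

/-- coefficient vector of `∏ (1+x_i)^{b_i}` -/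
def fB (b : Fin n → ℕ) : (Fin n → ℕ) →₀ ℚ :=
  Finsupp.onFinset (Finset.Iic b) (fun a => c a b)
    (fun a h => Finset.mem_Iic.2 (le_of_c_ne_zero h))

@[simp] lemma fB_apply (b a : Fin n → ℕ) : fB b a = c a b := rfl

/-- ambient support region -/
def S (B : Finset (Fin n → ℕ)) : Finset (Fin n → ℕ) := B.biUnion (fun b => Finset.Iic b)

/-- the span of the columns -/
def W (B : Finset (Fin n → ℕ)) : Submodule ℚ ((Fin n → ℕ) →₀ ℚ) :=
  Submodule.span ℚ (fB '' ↑B)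

lemma W_mono {B B' : Finset (Fin n → ℕ)} (h : B ⊆ B') : W B ≤ W B' :=
  Submodule.span_mono (Set.image_mono (by exact_mod_cast h))

lemma support_subset_S {B : Finset (Fin n → ℕ)} {f : (Fin n → ℕ) →₀ ℚ} (hf : f ∈ W B) :
    f.support ⊆ S B := by
  have hle : W B ≤ Finsupp.supported ℚ ℚ (↑(S B) : Set (Fin n → ℕ)) := by
    rw [W, Submodule.span_le]
    rintro g ⟨b, hb, rfl⟩
    rw [SetLike.mem_coe, Finsupp.mem_supported]
    intro a ha
    have h1 : a ∈ Finset.Iic b := Finsupp.support_onFinset_subset ha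
    exact_mod_cast Finset.subset_biUnion_of_mem (fun b => Finset.Iic b)
      (by exact_mod_cast hb) h1
  exact_mod_cast (Finsupp.mem_supported ℚ f).1 (hle hf)

noncomputable instance LO : LinearOrder (Lex (Fin n → ℕ)) :=
  inferInstance

lemma toLex_lt_of_lt {e m : Fin n → ℕ} (hle : e ≤ m) (hne : e ≠ m) :
    toLex e < toLex m := by
  have hT : (Finset.univ.filter (fun j => e j ≠ m j)).Nonempty := by
    have : ∃ j, e j ≠ m j := by
      by_contra h; push_neg at h; exact hne (funext h)
    obtain ⟨j, hj⟩ := this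
    exact ⟨j, by simp [hj]⟩
  set T := Finset.univ.filter (fun j => e j ≠ m j) with hTdef
  refine ⟨T.min' hT, fun j hj => ?_, ?_⟩
  all_goals simp only [Pi.toLex_apply]
  · by_contra hja
    exact absurd (T.min'_le j (by simp [hTdef, hja])) (not_le.2 hj)
  · exact lt_of_le_of_ne (hle _) (by have := T.min'_mem hT; simpa [hTdef] using this)

lemma toLex_mono {e m : Fin n → ℕ} (h : e ≤ m) : toLex e ≤ toLex m := by
  rcases eq_or_ne e m with rfl | hne
  · exact le_rfl
  · exact le_of_lt (toLex_lt_of_lt h hne)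

lemma toLex_add_single_lt_iff (i : Fin n) {x y : Fin n → ℕ} :
    toLex (x + Pi.single i 1) < toLex (y + Pi.single i 1) ↔ toLex x < toLex y := by
  have aux : ∀ u v : Fin n → ℕ, toLex u < toLex v →
      toLex (u + Pi.single i 1) < toLex (v + Pi.single i 1) := by
    rintro u v ⟨k, h1, h2⟩
    simp only [Pi.toLex_apply] at h1 h2
    have h1' : ∀ j, j < k → u j = v j := fun j hj => h1 j hj
    have h2' : u k < v k := h2
    exact ⟨k, fun j hj => by
        simp only [Pi.toLex_apply, Pi.add_apply, h1' j hj], by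
      simpa only [Pi.toLex_apply, Pi.add_apply] using Nat.add_lt_add_right h2' _⟩
  constructor
  · intro h
    rcases lt_trichotomy (toLex x) (toLex y) with hlt | heq | hgt
    · exact hlt
    · exfalso
      have : x = y := toLex.injective heq
      subst this
      exact lt_irrefl _ h
    · exact absurd (aux _ _ hgt) (asymm h)
  · exact aux x y

lemma toLex_add_single_le_iff (i : Fin n) {x y : Fin n → ℕ} :
    toLex (x + Pi.single i 1) ≤ toLex (y + Pi.single i 1) ↔ toLex x ≤ toLex y := by
  rw [← not_lt, ← not_lt, not_iff_not]
  exact toLex_add_single_lt_iff i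

/-- `a` is the lex-minimal element of the support of `f` -/
def IsLmin (f : (Fin n → ℕ) →₀ ℚ) (a : Fin n → ℕ) : Prop :=
  a ∈ f.support ∧ ∀ m ∈ f.support, toLex a ≤ toLex m

lemma exists_isLmin {f : (Fin n → ℕ) →₀ ℚ} (hf : f ≠ 0) : ∃ a, IsLmin f a := by
  have hne : (f.support.image (toLex : (Fin n → ℕ) → Lex (Fin n → ℕ))).Nonempty :=
    (Finsupp.support_nonempty_iff.2 hf).image _
  obtain ⟨x, hx, hmin⟩ := Finset.exists_min_image f.support
    (toLex : (Fin n → ℕ) → Lex (Fin n → ℕ)) (Finsupp.support_nonempty_iff.2 hf)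
  exact ⟨x, hx, hmin⟩

/-- the derivation operator `(1+x_i)∂_i` on coefficient vectors -/
def EopFun (i : Fin n) (f : (Fin n → ℕ) →₀ ℚ) : (Fin n → ℕ) →₀ ℚ :=
  Finsupp.onFinset (f.support ∪ f.support.image (fun m => m - Pi.single i 1))
    (fun m => ((m i : ℚ) + 1) * f (m + Pi.single i 1) + (m i : ℚ) * f m)
    (fun m h => by
      by_cases h2 : f m = 0
      · by_cases h1 : f (m + Pi.single i 1) = 0
        · exfalso
          apply h
          show ((m i : ℚ) + 1) * f (m + Pi.single i 1) + (m i : ℚ) * f m = 0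
          rw [h1, h2]; ring
        · refine Finset.mem_union_right _ (Finset.mem_image.2
            ⟨m + Pi.single i 1, Finsupp.mem_support_iff.2 h1, ?_⟩)
          funext j
          simp [Pi.single_apply]
      · exact Finset.mem_union_left _ (Finsupp.mem_support_iff.2 h2))

@[simp] lemma EopFun_apply (i : Fin n) (f : (Fin n → ℕ) →₀ ℚ) (m : Fin n → ℕ) :
    EopFun i f m = ((m i : ℚ) + 1) * f (m + Pi.single i 1) + (m i : ℚ) * f m := rfl

def Eop (i : Fin n) : ((Fin n → ℕ) →₀ ℚ) →ₗ[ℚ] ((Fin n → ℕ) →₀ ℚ) where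
  toFun := EopFun i
  map_add' f g := by
    ext m
    simp only [EopFun_apply, Finsupp.add_apply]
    ring
  map_smul' q f := by
    ext m
    simp only [EopFun_apply, Finsupp.smul_apply, smul_eq_mul, RingHom.id_apply]
    ring

lemma Eop_fB (i : Fin n) (b : Fin n → ℕ) : Eop i (fB b) = (b i : ℚ) • fB b := by
  ext a
  have hsplit : ∀ x : Fin n → ℕ, c x b =
      ((b i).choose (x i) : ℚ) * ∏ j ∈ Finset.univ.erase i, ((b j).choose (x j) : ℚ) :=
    fun x => (Finset.mul_prod_erase Finset.univ _ (Finset.mem_univ i)).symm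
  have hete : ∀ j ∈ Finset.univ.erase i,
      ((b j).choose ((a + Pi.single i 1 : Fin n → ℕ) j) : ℚ) = ((b j).choose (a j) : ℚ) := by
    intro j hj
    have hji : j ≠ i := (Finset.mem_erase.1 hj).1
    simp [Pi.single_eq_of_ne hji]
  have h1 : c (a + Pi.single i 1) b =
      ((b i).choose (a i + 1) : ℚ) * ∏ j ∈ Finset.univ.erase i, ((b j).choose (a j) : ℚ) := by
    rw [hsplit]
    rw [Finset.prod_congr rfl hete]
    simp [Pi.single_eq_same]
  have hkey : ((a i : ℚ) + 1) * ((b i).choose (a i + 1) : ℚ) + (a i : ℚ) * ((b i).choose (a i) : ℚ)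
      = (b i : ℚ) * ((b i).choose (a i) : ℚ) := by
    exact_mod_cast congrArg (fun t : ℕ => (t : ℚ)) (choose_identity (b i) (a i))
  show ((a i : ℚ) + 1) * fB b (a + Pi.single i 1) + (a i : ℚ) * fB b a
      = ((b i : ℚ) • fB b) a
  rw [Finsupp.smul_apply]
  simp only [fB_apply, smul_eq_mul]
  rw [h1, hsplit a]
  linear_combination (∏ j ∈ Finset.univ.erase i, ((b j).choose (a j) : ℚ)) * hkey

lemma Eop_mem_W {B : Finset (Fin n → ℕ)} {f : (Fin n → ℕ) →₀ ℚ} (hf : f ∈ W B) (i : Fin n) :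
    Eop i f ∈ W B := by
  induction hf using Submodule.span_induction with
  | mem x hx =>
    obtain ⟨b, hb, rfl⟩ := hx
    rw [Eop_fB]
    exact Submodule.smul_mem _ _ (Submodule.subset_span ⟨b, hb, rfl⟩)
  | zero => rw [map_zero]; exact Submodule.zero_mem _
  | add x y _ _ hx hy => rw [map_add]; exact Submodule.add_mem _ hx hy
  | smul q x _ hx => rw [map_smul]; exact Submodule.smul_mem _ _ hx

open scoped Classical in
/-- the cone-closed set of lex-minimal monomials -/
def Phi (B : Finset (Fin n → ℕ)) : Finset (Fin n → ℕ) :=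
  (S B).filter (fun a => ∃ f ∈ W B, IsLmin f a)

lemma mem_Phi {B : Finset (Fin n → ℕ)} {a : Fin n → ℕ} :
    a ∈ Phi B ↔ ∃ f ∈ W B, IsLmin f a := by
  classical
  constructor
  · intro h
    exact (Finset.mem_filter.1 h).2
  · intro h
    refine Finset.mem_filter.2 ⟨?_, h⟩
    obtain ⟨f, hfW, ha, _⟩ := h
    exact support_subset_S hfW ha

lemma Phi_mono {B B' : Finset (Fin n → ℕ)} (h : B ⊆ B') : Phi B ⊆ Phi B' := by
  intro a ha
  obtain ⟨f, hfW, hlm⟩ := mem_Phi.1 ha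
  exact mem_Phi.2 ⟨f, W_mono h hfW, hlm⟩

lemma Phi_step {B : Finset (Fin n → ℕ)} {a : Fin n → ℕ} (ha : a ∈ Phi B) (i : Fin n)
    (hi : 1 ≤ a i) : a - Pi.single i 1 ∈ Phi B := by
  obtain ⟨f, hfW, hsupp, hmin⟩ := mem_Phi.1 ha
  set e : Fin n → ℕ := a - Pi.single i 1 with he
  have hea : e + Pi.single i 1 = a := by
    funext j
    by_cases hj : j = i
    · subst hj
      simp only [he, Pi.add_apply, Pi.sub_apply, Pi.single_eq_same]
      omega
    · simp [he, Pi.single_eq_of_ne hj]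
  have hele : e ≤ a := by
    intro j
    simp only [he, Pi.sub_apply]
    omega
  have hene : e ≠ a := by
    intro hcontr
    have := congrFun hcontr i
    simp only [he, Pi.sub_apply, Pi.single_eq_same] at this
    omega
  have hfa : f a ≠ 0 := Finsupp.mem_support_iff.1 hsupp
  have hfe : f e = 0 := by
    by_contra hfe
    have h1 := hmin e (Finsupp.mem_support_iff.2 hfe)
    exact absurd h1 (not_le.2 (toLex_lt_of_lt hele hene))
  have hge : Eop i f e = ((e i : ℚ) + 1) * f a := by
    show EopFun i f e = _
    rw [EopFun_apply, hea, hfe]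
    ring
  have hge0 : Eop i f e ≠ 0 := by
    rw [hge]
    exact mul_ne_zero (by positivity) hfa
  refine mem_Phi.2 ⟨Eop i f, Eop_mem_W hfW i, Finsupp.mem_support_iff.2 hge0, ?_⟩
  intro m hm
  have hgm : EopFun i f m ≠ 0 := Finsupp.mem_support_iff.1 hm
  have hcases : f (m + Pi.single i 1) ≠ 0 ∨ f m ≠ 0 := by
    by_contra hc
    push_neg at hc
    apply hgm
    rw [EopFun_apply, hc.1, hc.2]
    ring
  rcases hcases with hc | hc
  · have h1 : toLex a ≤ toLex (m + Pi.single i 1) := hmin _ (Finsupp.mem_support_iff.2 hc)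
    rw [← hea] at h1
    exact (toLex_add_single_le_iff i).1 h1
  · exact le_trans (toLex_mono hele) (hmin m (Finsupp.mem_support_iff.2 hc))

lemma Phi_cone {B : Finset (Fin n → ℕ)} :
    ∀ m ∈ Phi B, ∀ e : Fin n → ℕ, e ≤ m → e ∈ Phi B := by
  suffices H : ∀ k : ℕ, ∀ m e : Fin n → ℕ, (∑ j, (m j - e j)) = k →
      m ∈ Phi B → e ≤ m → e ∈ Phi B by
    intro m hm e he
    exact H _ m e rfl hm he
  intro k
  induction k with
  | zero =>
    intro m e hsum hm he
    have : e = m := by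
      funext j
      have hj : m j - e j = 0 := Finset.sum_eq_zero_iff.1 hsum j (Finset.mem_univ j)
      have hj2 : e j ≤ m j := he j
      omega
    rwa [this]
  | succ k ih =>
    intro m e hsum hm he
    have hex : ∃ i, e i < m i := by
      by_contra hc
      push_neg at hc
      have : ∀ j, m j - e j = 0 := fun j => by have := hc j; omega
      rw [Finset.sum_eq_zero (fun j _ => this j)] at hsum
      omega
    obtain ⟨i, hi⟩ := hex
    have hm' : m - Pi.single i 1 ∈ Phi B := Phi_step hm i (by omega)
    set m' : Fin n → ℕ := m - Pi.single i 1 with hm'def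
    have hem' : e ≤ m' := by
      intro j
      by_cases hj : j = i
      · subst hj
        simp only [hm'def, Pi.sub_apply, Pi.single_eq_same]
        omega
      · have h0 : m' j = m j := by simp [hm'def, Pi.single_apply, hj]
        rw [h0]
        exact he j
    refine ih m' e ?_ hm' hem'
    have h1 : ∑ j, (m j - e j) = (m i - e i) + ∑ j ∈ Finset.univ.erase i, (m j - e j) :=
      (Finset.add_sum_erase Finset.univ _ (Finset.mem_univ i)).symm
    have h2 : ∑ j, (m' j - e j) = (m' i - e i) + ∑ j ∈ Finset.univ.erase i, (m' j - e j) :=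
      (Finset.add_sum_erase Finset.univ _ (Finset.mem_univ i)).symm
    have h3 : ∑ j ∈ Finset.univ.erase i, (m' j - e j) = ∑ j ∈ Finset.univ.erase i, (m j - e j) := by
      refine Finset.sum_congr rfl (fun j hj => ?_)
      have hji : j ≠ i := (Finset.mem_erase.1 hj).1
      simp [hm'def, Pi.single_eq_of_ne hji]
    have h4 : m' i = m i - 1 := by simp [hm'def, Pi.single_eq_same]
    rw [h2, h3, h4]
    omega

lemma sum_smul_fB_mem {B : Finset (Fin n → ℕ)} (g : B → ℚ) :
    (∑ b : B, g b • fB (b : Fin n → ℕ)) ∈ W B := by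
  refine Submodule.sum_mem _ (fun b _ => Submodule.smul_mem _ _ ?_)
  exact Submodule.subset_span ⟨(b : Fin n → ℕ), b.2, rfl⟩

lemma sum_smul_fB_apply {B : Finset (Fin n → ℕ)} (g : B → ℚ) (x : Fin n → ℕ) :
    (∑ b : B, g b • fB (b : Fin n → ℕ)) x = ∑ b : B, g b * c x (b : Fin n → ℕ) := by
  rw [Finsupp.finset_sum_apply]
  refine Finset.sum_congr rfl (fun b _ => ?_)
  rw [Finsupp.smul_apply, fB_apply, smul_eq_mul]

/-- independence of the columns of the transfer matrix -/
lemma cols_indep {B : Finset (Fin n → ℕ)} (g : B → ℚ)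
    (hg : ∀ a : (Phi B : Finset (Fin n → ℕ)), ∑ b : B, g b * c (a : Fin n → ℕ) (b : Fin n → ℕ) = 0) :
    ∀ b, g b = 0 := by
  classical
  set F := ∑ b : B, g b • fB (b : Fin n → ℕ) with hF
  have hFW : F ∈ W B := sum_smul_fB_mem g
  have hF0 : F = 0 := by
    by_contra hFne
    obtain ⟨a, hlm⟩ := exists_isLmin hFne
    have haPhi : a ∈ Phi B := mem_Phi.2 ⟨F, hFW, hlm⟩
    have h1 : F a = 0 := by
      rw [hF, sum_smul_fB_apply]
      exact hg ⟨a, haPhi⟩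
    exact absurd h1 (Finsupp.mem_support_iff.1 hlm.1)
  by_contra hc
  push_neg at hc
  obtain ⟨b0, hb0⟩ := hc
  have hTne : (Finset.univ.filter (fun b : B => g b ≠ 0)).Nonempty := ⟨b0, by simp [hb0]⟩
  obtain ⟨bs, hbsT, hmax⟩ := Finset.exists_max_image _
    (fun b : B => toLex (b : Fin n → ℕ)) hTne
  have hgbs : g bs ≠ 0 := (Finset.mem_filter.1 hbsT).2
  have h2 : F (bs : Fin n → ℕ) = g bs := by
    rw [hF, sum_smul_fB_apply]
    rw [Finset.sum_eq_single_of_mem bs (Finset.mem_univ bs)]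
    · rw [c_self, mul_one]
    · intro b _ hbne
      by_cases hgb : g b = 0
      · rw [hgb, zero_mul]
      · have hcz : c (bs : Fin n → ℕ) (b : Fin n → ℕ) = 0 := by
          by_contra hne
          have hle : (bs : Fin n → ℕ) ≤ (b : Fin n → ℕ) := le_of_c_ne_zero hne
          have h3 : toLex (b : Fin n → ℕ) ≤ toLex (bs : Fin n → ℕ) :=
            hmax b (Finset.mem_filter.2 ⟨Finset.mem_univ b, hgb⟩)
          have h4 : toLex (bs : Fin n → ℕ) = toLex (b : Fin n → ℕ) :=
            le_antisymm (toLex_mono hle) h3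
          exact hbne (Subtype.ext (toLex.injective h4).symm)
        rw [hcz, mul_zero]
  rw [hF0] at h2
  exact hgbs (by simpa using h2.symm)

lemma card_Phi_le {B : Finset (Fin n → ℕ)} : (Phi B).card ≤ B.card := by
  classical
  have hch : ∀ a : (Phi B : Finset (Fin n → ℕ)), ∃ f, f ∈ W B ∧ IsLmin f (a : Fin n → ℕ) := by
    intro a
    obtain ⟨f, h1, h2⟩ := mem_Phi.1 a.2
    exact ⟨f, h1, h2⟩
  choose F hFW hFlm using hch
  have hind : LinearIndependent ℚ (fun a : (Phi B : Finset (Fin n → ℕ)) => (⟨F a, hFW a⟩ : W B)) := by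
    rw [Fintype.linearIndependent_iff]
    intro g hg
    by_contra hc
    push_neg at hc
    obtain ⟨a0, ha0⟩ := hc
    have hTne : (Finset.univ.filter (fun a : (Phi B : Finset (Fin n → ℕ)) => g a ≠ 0)).Nonempty :=
      ⟨a0, by simp [ha0]⟩
    obtain ⟨am, hamT, hmin⟩ := Finset.exists_min_image _
      (fun a : (Phi B : Finset (Fin n → ℕ)) => toLex (a : Fin n → ℕ)) hTne
    have hgam : g am ≠ 0 := (Finset.mem_filter.1 hamT).2
    have hamb : (∑ a : (Phi B : Finset (Fin n → ℕ)), g a • F a) = 0 := by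
      have := congrArg (Subtype.val : W B → ((Fin n → ℕ) →₀ ℚ)) hg
      simpa using this
    have h2 := congrArg (fun f : (Fin n → ℕ) →₀ ℚ => f (am : Fin n → ℕ)) hamb
    simp only [Finsupp.coe_zero, Pi.zero_apply] at h2
    rw [Finsupp.finset_sum_apply] at h2
    rw [Finset.sum_eq_single_of_mem am (Finset.mem_univ am)] at h2
    · rw [Finsupp.smul_apply, smul_eq_mul] at h2
      have : F am (am : Fin n → ℕ) ≠ 0 := Finsupp.mem_support_iff.1 (hFlm am).1
      exact hgam (by
        rcases mul_eq_zero.1 h2 with h | h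
        · exact h
        · exact absurd h this)
    · intro a _ hane
      by_cases hga : g a = 0
      · simp [hga]
      · have hz : F a (am : Fin n → ℕ) = 0 := by
          by_contra hne
          have h3 : toLex (a : Fin n → ℕ) ≤ toLex (am : Fin n → ℕ) :=
            (hFlm a).2 _ (Finsupp.mem_support_iff.2 hne)
          have h4 : toLex (am : Fin n → ℕ) ≤ toLex (a : Fin n → ℕ) :=
            hmin a (Finset.mem_filter.2 ⟨Finset.mem_univ a, hga⟩)
          exact hane (Subtype.ext (toLex.injective (le_antisymm h3 h4)))
        rw [Finsupp.smul_apply, hz, smul_zero]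
  haveI : Module.Finite ℚ (W B) :=
    Module.Finite.span_of_finite ℚ (Set.Finite.image fB B.finite_toSet)
  have hcard := hind.fintype_card_le_finrank
  have hrk : Module.finrank ℚ (W B) ≤ B.card := by
    have h1 : W B = Submodule.span ℚ (↑(B.image fB) : Set ((Fin n → ℕ) →₀ ℚ)) := by
      rw [W, Finset.coe_image]
    have h2 : Module.finrank ℚ (Submodule.span ℚ (↑(B.image fB) : Set ((Fin n → ℕ) →₀ ℚ)))
        ≤ (B.image fB).card := by
      have := finrank_span_finset_le_card (R := ℚ) (B.image fB)
      simpa [Set.finrank] using this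
    rw [h1]
    exact le_trans h2 (Finset.card_image_le)
  calc (Phi B).card = Fintype.card (Phi B : Finset (Fin n → ℕ)) := (Fintype.card_coe _).symm
    _ ≤ Module.finrank ℚ (W B) := hcard
    _ ≤ B.card := hrk

lemma card_le_Phi {B : Finset (Fin n → ℕ)} : B.card ≤ (Phi B).card := by
  classical
  have hind : LinearIndependent ℚ
      (fun b : B => (fun a : (Phi B : Finset (Fin n → ℕ)) => c (a : Fin n → ℕ) (b : Fin n → ℕ))) := by
    rw [Fintype.linearIndependent_iff]
    intro g hg
    refine cols_indep g (fun a => ?_)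
    have := congrFun hg a
    simpa [Finset.sum_apply] using this
  have hcard := hind.fintype_card_le_finrank
  rw [Module.finrank_fintype_fun_eq_card] at hcard
  simpa [Fintype.card_coe] using hcard

lemma Phi_card {B : Finset (Fin n → ℕ)} : (Phi B).card = B.card :=
  le_antisymm card_Phi_le card_le_Phi

end

end FCC

/-- **Monotone Find-Cone-Closed map.** For `n ≥ 1` there is a map `Φ` on finite sets
of exponent vectors in `ℕ^n` such that `Φ(B)` is cone-closed, `|Φ(B)| = |B|`, the
transfer matrix `T(a,b) = ∏ᵢ C(bᵢ, aᵢ)` (rows indexed by `Φ(B)`, columns by `B`)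
is invertible over `ℚ`, and `Φ` is monotone with respect to inclusion. -/
theorem find_cone_closed_monotone_map
    (n : ℕ) (hn : 1 ≤ n) :
    ∃ Φ : Finset (Fin n → ℕ) → Finset (Fin n → ℕ),
      (∀ B, ∀ m ∈ Φ B, ∀ e : Fin n → ℕ, e ≤ m → e ∈ Φ B) ∧
      (∀ B, (Φ B).card = B.card) ∧
      (∀ B : Finset (Fin n → ℕ),
        ∃ N : Matrix B (Φ B) ℚ,
          (Matrix.of fun (a : Φ B) (b : B) =>
              ((∏ i, ((b : Fin n → ℕ) i).choose ((a : Fin n → ℕ) i) : ℕ) : ℚ)) * N = 1 ∧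
          N * (Matrix.of fun (a : Φ B) (b : B) =>
              ((∏ i, ((b : Fin n → ℕ) i).choose ((a : Fin n → ℕ) i) : ℕ) : ℚ)) = 1) ∧
      (∀ B B' : Finset (Fin n → ℕ), B ⊆ B' → Φ B ⊆ Φ B') := by
  classical
  refine ⟨FCC.Phi, fun B => FCC.Phi_cone, fun B => FCC.Phi_card, ?_, fun B B' h => FCC.Phi_mono h⟩
  intro B
  set M : Matrix (FCC.Phi B : Finset (Fin n → ℕ)) B ℚ :=
    Matrix.of fun (a : (FCC.Phi B : Finset (Fin n → ℕ))) (b : B) =>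
      ((∏ i, ((b : Fin n → ℕ) i).choose ((a : Fin n → ℕ) i) : ℕ) : ℚ) with hM
  have hMc : ∀ (a : (FCC.Phi B : Finset (Fin n → ℕ))) (b : B),
      M a b = FCC.c (a : Fin n → ℕ) (b : Fin n → ℕ) := by
    intro a b
    rw [hM]
    simp only [Matrix.of_apply, FCC.c]
    push_cast
    rfl
  have hcards : Fintype.card B = Fintype.card (FCC.Phi B : Finset (Fin n → ℕ)) := by
    rw [Fintype.card_coe, Fintype.card_coe, FCC.Phi_card]
  set e : (B : Finset (Fin n → ℕ)) ≃ (FCC.Phi B : Finset (Fin n → ℕ)) :=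
    Fintype.equivOfCardEq hcards with he
  set Msq : Matrix B B ℚ := Matrix.of (fun r c => M (e r) c) with hMsq
  have hU : IsUnit Msq := by
    rw [← Matrix.linearIndependent_cols_iff_isUnit]
    rw [Fintype.linearIndependent_iff]
    intro g hg
    refine FCC.cols_indep g (fun a => ?_)
    have h1 := congrFun hg (e.symm a)
    simp only [Finset.sum_apply, Pi.smul_apply, Matrix.transpose_apply, smul_eq_mul,
      Pi.zero_apply] at h1
    have h2 : ∀ b : B, Msq (e.symm a) b = FCC.c (a : Fin n → ℕ) (b : Fin n → ℕ) := by
      intro b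
      rw [hMsq]
      simp only [Matrix.of_apply]
      rw [Equiv.apply_symm_apply, hMc]
    exact (Finset.sum_congr rfl (fun b _ => by rw [Matrix.col_apply, h2 b])).symm.trans h1
  have hdet : IsUnit Msq.det := (Matrix.isUnit_iff_isUnit_det _).1 hU
  have hmul1 : Msq * Msq⁻¹ = 1 := Matrix.mul_nonsing_inv _ hdet
  have hmul2 : Msq⁻¹ * Msq = 1 := Matrix.nonsing_inv_mul _ hdet
  refine ⟨Matrix.of (fun b a => Msq⁻¹ b (e.symm a)), ?_, ?_⟩
  · ext a a'
    rw [Matrix.mul_apply]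
    have h3 : ∀ b : B, M a b = Msq (e.symm a) b := by
      intro b
      rw [hMsq]
      simp only [Matrix.of_apply]
      rw [Equiv.apply_symm_apply]
    calc ∑ b : B, M a b * Matrix.of (fun b a => Msq⁻¹ b (e.symm a)) b a'
        = ∑ b : B, Msq (e.symm a) b * Msq⁻¹ b (e.symm a') := by
          refine Finset.sum_congr rfl (fun b _ => ?_)
          rw [h3 b]
          rfl
      _ = (Msq * Msq⁻¹) (e.symm a) (e.symm a') := (Matrix.mul_apply).symm
      _ = (1 : Matrix B B ℚ) (e.symm a) (e.symm a') := by rw [hmul1]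
      _ = (1 : Matrix (FCC.Phi B : Finset (Fin n → ℕ)) (FCC.Phi B : Finset (Fin n → ℕ)) ℚ) a a' := by
          by_cases hq : a = a'
          · subst hq
            simp [Matrix.one_apply]
          · rw [Matrix.one_apply_ne (fun hcontr => hq (e.symm.injective hcontr)),
              Matrix.one_apply_ne hq]
  · ext b b'
    rw [Matrix.mul_apply]
    have h3 : ∀ a : (FCC.Phi B : Finset (Fin n → ℕ)), M a b' = Msq (e.symm a) b' := by
      intro a
      rw [hMsq]
      simp only [Matrix.of_apply]
      rw [Equiv.apply_symm_apply]
    calc ∑ a : (FCC.Phi B : Finset (Fin n → ℕ)),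
          Matrix.of (fun b a => Msq⁻¹ b (e.symm a)) b a * M a b'
        = ∑ a : (FCC.Phi B : Finset (Fin n → ℕ)), Msq⁻¹ b (e.symm a) * Msq (e.symm a) b' := by
          refine Finset.sum_congr rfl (fun a _ => ?_)
          rw [h3 a]
          rfl
      _ = ∑ r : B, Msq⁻¹ b r * Msq r b' := Equiv.sum_comp e.symm (fun r => Msq⁻¹ b r * Msq r b')
      _ = (Msq⁻¹ * Msq) b b' := (Matrix.mul_apply).symm
      _ = (1 : Matrix B B ℚ) b b' := by rw [hmul2]
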